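/- (Lorentz–Udriste world-force law, potential case, Euclidean metric.) Let f : ℝⁿ → ℝ be C¹, let H₀ ∈ ℝ, and let x : I → ℝⁿ be a nonconstant C² solution of x″(t) = ∇f(x(t)) with constant Hamiltonian ½‖x′(t)‖² − f(x(t)) = H₀ and with φ(x(t)) := H₀ + f(x(t)) > 0 for all t ∈ I. Define the reparametrization s(t) = ∫_{t₀}^{t} 2 φ(x(τ)) dτ (a strictly increasing C¹ bijection onto an interval J) and set y(s) = x(t(s)) where t(s) is its inverse. Then y satisfies the geodesic equation of the conformal (Jacobi) metric ḡ = φ · δ, namely ÿ(s) + (1/φ(y(s))) ( ⟨∇φ(y(s)), ẏ(s)⟩ ẏ(s) − ½‖ẏ(s)‖² ∇φ(y(s)) ) = 0 for all s ∈ J; i.e., every such trajectory is a pregeodesic of the Riemann–Jacobi manifold (ℝⁿ restricted to {φ > 0}, ḡ = (H₀ + f) δ). -/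

import Mathlib

open scoped RealInnerProductSpace

/-- Lorentz–Udriste world-force law, potential case, Euclidean metric:
every nonconstant C² solution of `x'' = ∇f(x)` with constant Hamiltonian
`½‖x'‖² - f(x) = H₀` and `φ := H₀ + f ∘ x > 0`, reparametrized by the strictly
increasing map `s(t) = ∫_{t₀}^t 2 φ(x(τ)) dτ`, satisfies the geodesic equation of
the conformal Jacobi metric `ḡ = (H₀ + f) δ`:
`ÿ + (1/φ(y)) (⟪∇φ(y), ẏ⟫ ẏ - ½‖ẏ‖² ∇φ(y)) = 0` on `J = σ '' I`;
i.e. the trajectory is a pregeodesic of the Riemann–Jacobi manifold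
`({φ > 0}, (H₀ + f) δ)`. -/
theorem lorentz_udriste_world_force_law_potential {n : ℕ}
    (f : EuclideanSpace ℝ (Fin n) → ℝ)
    (hf : ContDiff ℝ 1 f)
    (H₀ a b t₀ : ℝ) (ht₀ : t₀ ∈ Set.Ioo a b)
    (c c' c'' : ℝ → EuclideanSpace ℝ (Fin n))
    (hc : ∀ t ∈ Set.Ioo a b, HasDerivAt c (c' t) t)
    (hc' : ∀ t ∈ Set.Ioo a b, HasDerivAt c' (c'' t) t)
    (hode : ∀ t ∈ Set.Ioo a b, c'' t = gradient f (c t))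
    (hnonconst : ∃ s ∈ Set.Ioo a b, ∃ t ∈ Set.Ioo a b, c s ≠ c t)
    (hH : ∀ t ∈ Set.Ioo a b, (1 / 2) * ‖c' t‖ ^ 2 - f (c t) = H₀)
    (φ : EuclideanSpace ℝ (Fin n) → ℝ)
    (hφ : ∀ x, φ x = H₀ + f x)
    (hpos : ∀ t ∈ Set.Ioo a b, 0 < φ (c t))
    (σ : ℝ → ℝ)
    (hσ : ∀ t, σ t = ∫ τ in t₀..t, 2 * φ (c τ))
    (y y' y'' : ℝ → EuclideanSpace ℝ (Fin n))
    (hy : ∀ t ∈ Set.Ioo a b, y (σ t) = c t)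
    (hy' : ∀ s ∈ σ '' Set.Ioo a b, HasDerivAt y (y' s) s)
    (hy'' : ∀ s ∈ σ '' Set.Ioo a b, HasDerivAt y' (y'' s) s) :
    StrictMonoOn σ (Set.Ioo a b) ∧
      ∀ s ∈ σ '' Set.Ioo a b,
        y'' s + (φ (y s))⁻¹ •
            (⟪gradient φ (y s), y' s⟫ • y' s
              - ((1 / 2) * ‖y' s‖ ^ 2) • gradient φ (y s)) = 0 := by
  classical
  have hfd : Differentiable ℝ f := hf.differentiable one_ne_zero
  have hφf : φ = fun x => H₀ + f x := funext hφ
  have hgradφ : ∀ x, gradient φ x = gradient f x := by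
    intro x
    simp only [gradient, hφf, fderiv_const_add]
  set I := Set.Ioo a b with hI
  have hIopen : IsOpen I := isOpen_Ioo
  have hccont : ContinuousOn c I := fun t ht => ((hc t ht).continuousAt).continuousWithinAt
  have hcont : ContinuousOn (fun τ => 2 * φ (c τ)) I := by
    rw [hφf]
    exact continuousOn_const.mul
      (continuousOn_const.add (hf.continuous.comp_continuousOn hccont))
  -- derivative of σ
  have hσd : ∀ t ∈ I, HasDerivAt σ (2 * φ (c t)) t := by
    intro t ht
    have huIcc : Set.uIcc t₀ t ⊆ I := Set.ordConnected_Ioo.uIcc_subset ht₀ ht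
    have hint : IntervalIntegrable (fun τ => 2 * φ (c τ)) MeasureTheory.volume t₀ t :=
      (hcont.mono huIcc).intervalIntegrable
    have hca : ContinuousAt (fun τ => 2 * φ (c τ)) t :=
      hcont.continuousAt (hIopen.mem_nhds ht)
    have hmeas : StronglyMeasurableAtFilter (fun τ => 2 * φ (c τ)) (nhds t)
        MeasureTheory.volume := hcont.stronglyMeasurableAtFilter hIopen t ht
    have := intervalIntegral.integral_hasDerivAt_right hint hmeas hca
    have hσfun : σ = fun u => ∫ τ in t₀..u, 2 * φ (c τ) := funext hσ
    rw [hσfun]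
    exact this
  have hmono : StrictMonoOn σ I := by
    apply strictMonoOn_of_deriv_pos (convex_Ioo a b)
      (fun t ht => (hσd t ht).continuousAt.continuousWithinAt)
    intro t ht
    rw [interior_Ioo] at ht
    rw [(hσd t ht).deriv]
    have := hpos t ht
    linarith
  refine ⟨hmono, ?_⟩
  -- derivative of t ↦ φ (c t)
  have hgc : ∀ t ∈ I, HasDerivAt (fun u => φ (c u)) ⟪c'' t, c' t⟫ t := by
    intro t ht
    have h1 : HasFDerivAt f (fderiv ℝ f (c t)) (c t) := (hfd (c t)).hasFDerivAt
    have h2 := h1.comp_hasDerivAt t (hc t ht)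
    have h3 : ⟪gradient f (c t), c' t⟫ = fderiv ℝ f (c t) (c' t) :=
      InnerProductSpace.toDual_symm_apply
    have h4 : HasDerivAt (fun u => H₀ + f (c u)) (fderiv ℝ f (c t) (c' t)) t :=
      h2.const_add H₀
    rw [hφf]
    rw [hode t ht, h3]
    exact h4
  -- key1 : first derivative relation
  have key1 : ∀ t ∈ I, c' t = (2 * φ (c t)) • y' (σ t) := by
    intro t ht
    have hyd : HasDerivAt y (y' (σ t)) (σ t) := hy' _ ⟨t, ht, rfl⟩
    have hcomp : HasDerivAt (y ∘ σ) ((2 * φ (c t)) • y' (σ t)) t :=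
      hyd.scomp t (hσd t ht)
    have heq : y ∘ σ =ᶠ[nhds t] c := by
      filter_upwards [hIopen.mem_nhds ht] with u hu
      exact hy u hu
    exact (hc t ht).unique (hcomp.congr_of_eventuallyEq heq.symm)
  intro s hs
  obtain ⟨t, ht, rfl⟩ := hs
  have hgt : 0 < φ (c t) := hpos t ht
  have hφne : φ (c t) ≠ 0 := ne_of_gt hgt
  have h2g : (2 : ℝ) * φ (c t) ≠ 0 := by positivity
  -- y' (σ t) explicitly
  have hy'eq : ∀ u ∈ I, y' (σ u) = (2 * φ (c u))⁻¹ • c' u := by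
    intro u hu
    have h2gu : (2 : ℝ) * φ (c u) ≠ 0 := by have := hpos u hu; positivity
    rw [key1 u hu, smul_smul, inv_mul_cancel₀ h2gu, one_smul]
  -- second derivative relation
  have hyd2 : HasDerivAt y' (y'' (σ t)) (σ t) := hy'' _ ⟨t, ht, rfl⟩
  have hcomp2 : HasDerivAt (fun u => y' (σ u)) ((2 * φ (c t)) • y'' (σ t)) t :=
    hyd2.scomp t (hσd t ht)
  have hinv : HasDerivAt (fun u => (2 * φ (c u))⁻¹)
      (-(2 * ⟪c'' t, c' t⟫) / (2 * φ (c t)) ^ 2) t :=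
    ((hgc t ht).const_mul 2).inv h2g
  have hrhs := hinv.smul (hc' t ht)
  have heq2 : (fun u => y' (σ u)) =ᶠ[nhds t] fun u => (2 * φ (c u))⁻¹ • c' u := by
    filter_upwards [hIopen.mem_nhds ht] with u hu
    exact hy'eq u hu
  have key2 := hcomp2.unique (hrhs.congr_of_eventuallyEq heq2)
  have hy''eq : y'' (σ t) = (2 * φ (c t))⁻¹ •
      ((2 * φ (c t))⁻¹ • c'' t
        + (-(2 * ⟪c'' t, c' t⟫) / (2 * φ (c t)) ^ 2) • c' t) := by
    rw [← key2, smul_smul, inv_mul_cancel₀ h2g, one_smul]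
  -- norm relation
  have hnorm : ‖c' t‖ ^ 2 = 2 * φ (c t) := by
    have := hH t ht
    rw [hφ]
    linarith
  -- assemble
  have hyc : y (σ t) = c t := hy t ht
  rw [hyc, hy''eq, hy'eq t ht, hgradφ, ← hode t ht]
  simp only [real_inner_smul_right, norm_smul, mul_pow, Real.norm_eq_abs, sq_abs, hnorm]
  match_scalars <;> field_simp <;> ring
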